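/- If r_R ∈ W minimizes r ↦ ‖y − r‖_R² over W and r_add ∈ V minimizes v ↦ ‖y − v‖_*² over V, then R·‖Q r_R‖² ≤ 2·‖r_R − r_add‖_*·‖y − r_add‖_*, and hence ‖Q r_R‖² ≤ 2·R⁻¹·√‖S‖·‖y − r_add‖_*·‖r_R − r_add‖, where ‖S‖ is the operator norm of S (Lemma 4: bound on the non-additive part of the penalized estimator). -/
import Mathlib


open scoped RealInnerProductSpace

/-- Cauchy–Schwarz for a PSD symmetric operator. -/
lemma psd_cauchy_schwarz
    {H : Type*} [NormedAddCommGroup H] [InnerProductSpace ℝ H]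
    (S : H →L[ℝ] H)
    (hS_sym : ∀ x y : H, ⟪S x, y⟫ = ⟪x, S y⟫)
    (hS_psd : ∀ x : H, 0 ≤ ⟪x, S x⟫) (b d : H) :
    ⟪b, S d⟫ ≤ Real.sqrt ⟪b, S b⟫ * Real.sqrt ⟪d, S d⟫ := by
  have key : ∀ t : ℝ, 0 ≤ ⟪d, S d⟫ * (t * t) + (2 * ⟪b, S d⟫) * t + ⟪b, S b⟫ := by
    intro t
    have h := hS_psd (b + t • d)
    have e1 : ⟪d, S b⟫ = ⟪b, S d⟫ := by
      rw [← hS_sym d b, real_inner_comm]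
    simp only [map_add, map_smul, inner_add_left, inner_add_right,
      real_inner_smul_left, real_inner_smul_right] at h
    rw [e1] at h
    linarith
  have hd := discrim_le_zero key
  have hsq : ⟪b, S d⟫ ^ 2 ≤ ⟪b, S b⟫ * ⟪d, S d⟫ := by
    simp only [discrim] at hd; nlinarith
  calc ⟪b, S d⟫ ≤ |⟪b, S d⟫| := le_abs_self _
    _ = Real.sqrt (⟪b, S d⟫ ^ 2) := by rw [Real.sqrt_sq_eq_abs]
    _ ≤ Real.sqrt (⟪b, S b⟫ * ⟪d, S d⟫) := Real.sqrt_le_sqrt hsq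
    _ = Real.sqrt ⟪b, S b⟫ * Real.sqrt ⟪d, S d⟫ := Real.sqrt_mul (hS_psd b) _

/-- Lemma 4: bound on the non-additive part of the penalized
estimator: with `‖u‖_*² = ⟪u, S u⟫` and `‖u‖_R² = ‖u‖_*² + R·‖Q u‖²`, if
`r_R ∈ W` minimizes `r ↦ ‖y − r‖_R²` over `W` and `r_add ∈ V` minimizes
`v ↦ ‖y − v‖_*²` over `V`, then
`R·‖Q r_R‖² ≤ 2·‖r_R − r_add‖_*·‖y − r_add‖_*`, and hence
`‖Q r_R‖² ≤ 2·R⁻¹·√‖S‖·‖y − r_add‖_*·‖r_R − r_add‖`. -/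
theorem lemma4_nonadditive_part_bound
    {H : Type*} [NormedAddCommGroup H] [InnerProductSpace ℝ H] [FiniteDimensional ℝ H]
    (S : H →L[ℝ] H)
    (hS_sym : ∀ x y : H, ⟪S x, y⟫ = ⟪x, S y⟫)
    (hS_psd : ∀ x : H, 0 ≤ ⟪x, S x⟫)
    (Q : H →L[ℝ] H)
    (hQ_idem : Q * Q = Q)
    (hQ_sym : ∀ x y : H, ⟪Q x, y⟫ = ⟪x, Q y⟫)
    (W : Submodule ℝ H) (V : Submodule ℝ H) (hVW : V ≤ W)
    (hQV : ∀ v ∈ V, Q v = 0)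
    (R : ℝ) (hR : 0 < R)
    (y : H) (hQy : Q y = 0)
    (r_R : H) (hrR_mem : r_R ∈ W)
    (hrR_min : ∀ r ∈ W,
      ⟪y - r_R, S (y - r_R)⟫ + R * ‖Q (y - r_R)‖ ^ 2 ≤
        ⟪y - r, S (y - r)⟫ + R * ‖Q (y - r)‖ ^ 2)
    (r_add : H) (hra_mem : r_add ∈ V)
    (hra_min : ∀ v ∈ V, ⟪y - r_add, S (y - r_add)⟫ ≤ ⟪y - v, S (y - v)⟫) :
    R * ‖Q r_R‖ ^ 2 ≤
        2 * Real.sqrt ⟪r_R - r_add, S (r_R - r_add)⟫ *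
          Real.sqrt ⟪y - r_add, S (y - r_add)⟫ ∧
      ‖Q r_R‖ ^ 2 ≤
        2 * R⁻¹ * Real.sqrt ‖S‖ * Real.sqrt ⟪y - r_add, S (y - r_add)⟫ *
          ‖r_R - r_add‖ := by
  set b := y - r_add with hb
  set a := y - r_R with ha
  set d := r_R - r_add with hdd
  have hbad : b = a + d := by simp only [hb, ha, hdd]; abel
  have hmin := hrR_min r_add (hVW hra_mem)
  have hQb : Q b = 0 := by
    simp [hb, map_sub, hQy, hQV r_add hra_mem]
  have hQa : ‖Q a‖ = ‖Q r_R‖ := by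
    have : Q a = -(Q r_R) := by simp [ha, map_sub, hQy]
    rw [this, norm_neg]
  rw [hQb, hQa] at hmin
  simp only [norm_zero, ← hb] at hmin
  -- ⟪a,Sa⟫ + R‖Qr_R‖² ≤ ⟪b,Sb⟫
  have e1 : ⟪d, S a⟫ = ⟪a, S d⟫ := by rw [← hS_sym d a, real_inner_comm]
  have hexp : ⟪b, S b⟫ = ⟪a, S a⟫ + 2 * ⟪b, S d⟫ - ⟪d, S d⟫ := by
    have e2 : ⟪d, S b⟫ = ⟪b, S d⟫ := by rw [← hS_sym d b, real_inner_comm]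
    rw [hbad] at e2 ⊢
    simp only [inner_add_add_self, map_add] at e2 ⊢
    simp only [inner_add_left, inner_add_right] at e2 ⊢
    nlinarith [e1]
  have hCS := psd_cauchy_schwarz S hS_sym hS_psd b d
  have h1 : R * ‖Q r_R‖ ^ 2 ≤ 2 * ⟪b, S d⟫ := by nlinarith [hS_psd d]
  have h1' : R * ‖Q r_R‖ ^ 2 ≤
      2 * Real.sqrt ⟪d, S d⟫ * Real.sqrt ⟪b, S b⟫ := by nlinarith
  refine ⟨h1', ?_⟩
  have hdle : Real.sqrt ⟪d, S d⟫ ≤ Real.sqrt ‖S‖ * ‖d‖ := by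
    have h2 : ⟪d, S d⟫ ≤ ‖S‖ * ‖d‖ ^ 2 := by
      calc ⟪d, S d⟫ ≤ ‖d‖ * ‖S d‖ := real_inner_le_norm d (S d)
        _ ≤ ‖d‖ * (‖S‖ * ‖d‖) := by
            have := S.le_opNorm d
            nlinarith [norm_nonneg d]
        _ = ‖S‖ * ‖d‖ ^ 2 := by ring
    calc Real.sqrt ⟪d, S d⟫ ≤ Real.sqrt (‖S‖ * ‖d‖ ^ 2) := Real.sqrt_le_sqrt h2
      _ = Real.sqrt ‖S‖ * ‖d‖ := by
          rw [Real.sqrt_mul (norm_nonneg S), Real.sqrt_sq (norm_nonneg d)]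
  have hQ2 : ‖Q r_R‖ ^ 2 ≤ R⁻¹ * (2 * Real.sqrt ⟪d, S d⟫ * Real.sqrt ⟪b, S b⟫) := by
    rw [le_inv_mul_iff₀ hR] at *
    linarith [h1']
  calc ‖Q r_R‖ ^ 2 ≤ R⁻¹ * (2 * Real.sqrt ⟪d, S d⟫ * Real.sqrt ⟪b, S b⟫) := hQ2
    _ ≤ R⁻¹ * (2 * (Real.sqrt ‖S‖ * ‖d‖) * Real.sqrt ⟪b, S b⟫) := by
        have h0 : (0:ℝ) ≤ Real.sqrt ⟪b, S b⟫ := Real.sqrt_nonneg _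
        have h0' : (0:ℝ) ≤ R⁻¹ := le_of_lt (inv_pos.mpr hR)
        gcongr
    _ = 2 * R⁻¹ * Real.sqrt ‖S‖ * Real.sqrt ⟪b, S b⟫ * ‖d‖ := by ring
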